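/- Let D be a finitely generated abelian group and S a D-graded commutative ring that is an integral domain. Let f ∈ S be a nonzero relevant homogeneous element. Then for every nonzero homogeneous h ∈ S there exist a positive integer N, a natural number k, and a nonzero homogeneous element g ∈ S dividing some power of f, such that N·deg(h) + deg(g) = k·deg(f) in D (equivalently, h^N·g/f^k has degree zero). -/

import Mathlib

/-- For a homogeneous element `f` of a `D`-graded ring `S`, the support group `D^f` is the
subgroup of `D` generated by the degrees of all (nonzero) homogeneous elements dividing some
power of `f`. -/
def supportGroup {D S : Type*} [AddCommGroup D] [CommRing S]
    (𝒜 : D → AddSubgroup S) (f : S) : AddSubgroup D :=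
  AddSubgroup.closure {d : D | ∃ g : S, g ≠ 0 ∧ g ∈ 𝒜 d ∧ ∃ k : ℕ, g ∣ f ^ k}

/-- In a group-graded domain, the cofactor of a nonzero homogeneous divisor of a homogeneous
element is homogeneous. -/
lemma homog_cofactor {D S : Type*} [AddCommGroup D] [DecidableEq D] [CommRing S] [IsDomain S]
    (𝒜 : D → AddSubgroup S) [GradedRing 𝒜] {g g' : S} {d e : D}
    (hg : g ∈ 𝒜 d) (hg0 : g ≠ 0) (he : g * g' ∈ 𝒜 e) : g' ∈ 𝒜 (e - d) := by
  have key : ∀ n : D, n ≠ e - d → (DirectSum.decompose 𝒜 g' n : S) = 0 := by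
    intro n hn
    have h1 : DirectSum.decompose 𝒜 (g * g') =
        DirectSum.of (fun i => 𝒜 i) e ⟨g * g', he⟩ := DirectSum.decompose_of_mem 𝒜 he
    have h2 : DirectSum.decompose 𝒜 (g * g') =
        DirectSum.of (fun i => 𝒜 i) d ⟨g, hg⟩ * DirectSum.decompose 𝒜 g' := by
      rw [DirectSum.decompose_mul, DirectSum.decompose_of_mem 𝒜 hg]
    have h3 := congrArg (fun x => ((x (d + n) : 𝒜 (d + n)) : S)) (h1.symm.trans h2)
    simp only at h3
    rw [DirectSum.coe_of_mul_apply_add, DirectSum.of_eq_of_ne] at h3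
    · have h4 := h3.symm
      rw [ZeroMemClass.coe_zero] at h4
      rcases mul_eq_zero.mp h4 with h5 | h5
      · exact absurd h5 hg0
      · exact h5
    · intro hc
      exact hn (by rw [← hc]; abel)
  have hsingle : DirectSum.decompose 𝒜 g' =
      DirectSum.of (fun i => 𝒜 i) (e - d) (DirectSum.decompose 𝒜 g' (e - d)) := by
    refine DFinsupp.ext fun n => ?_
    by_cases hn : n = e - d
    · subst hn; rw [DirectSum.of_eq_same]
    · rw [DirectSum.of_eq_of_ne _ _ _ hn]
      exact Subtype.ext (key n hn)
  have hg' : g' = ((DirectSum.decompose 𝒜 g' (e - d) : 𝒜 (e - d)) : S) := by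
    conv_lhs => rw [← (DirectSum.decompose 𝒜).symm_apply_apply g', hsingle]
    exact DirectSum.decompose_symm_of 𝒜 _
  rw [hg']
  exact (DirectSum.decompose 𝒜 g' (e - d)).2

theorem stmt_5 {D S : Type*} [AddCommGroup D] [AddGroup.FG D] [DecidableEq D]
    [CommRing S] [IsDomain S]
    (𝒜 : D → AddSubgroup S) [GradedRing 𝒜] (f : S) (df : D) (hf : f ∈ 𝒜 df) (hf0 : f ≠ 0)
    (hrel : (supportGroup 𝒜 f).FiniteIndex)
    (h : S) (dh : D) (hh : h ∈ 𝒜 dh) (hh0 : h ≠ 0) :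
    ∃ (N : ℕ) (k : ℕ) (g : S) (dg : D), 0 < N ∧ g ≠ 0 ∧ g ∈ 𝒜 dg ∧
      (∃ m : ℕ, g ∣ f ^ m) ∧ N • dh + dg = k • df := by
  set P : D → Prop := fun d => ∃ g : S, g ≠ 0 ∧ g ∈ 𝒜 d ∧ ∃ k : ℕ, g ∣ f ^ k with hP
  have P0 : P 0 := ⟨1, one_ne_zero, SetLike.one_mem_graded 𝒜, 0, by simp⟩
  have Padd : ∀ a b, P a → P b → P (a + b) := by
    rintro a b ⟨ga, ga0, hga, ka, hka⟩ ⟨gb, gb0, hgb, kb, hkb⟩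
    exact ⟨ga * gb, mul_ne_zero ga0 gb0, SetLike.mul_mem_graded hga hgb, ka + kb,
      by rw [pow_add]; exact mul_dvd_mul hka hkb⟩
  -- complement within a power of f
  have Pcompl : ∀ d, P d → ∃ k : ℕ, P (k • df - d) := by
    rintro d ⟨g, g0, hg, k, g', hgg'⟩
    refine ⟨k, g', ?_, ?_, k, Dvd.intro_left g hgg'.symm⟩
    · intro hz
      exact pow_ne_zero k hf0 (by rw [hgg', hz, mul_zero])
    · exact homog_cofactor 𝒜 hg g0 (hgg' ▸ SetLike.pow_mem_graded k hf)
  -- every element of supportGroup is a difference of two P-degrees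
  have hdiff : ∀ x ∈ supportGroup 𝒜 f, ∃ a b, P a ∧ P b ∧ x = a - b := by
    intro x hx
    refine AddSubgroup.closure_induction ?_ ?_ ?_ ?_ hx
    · intro d hd
      exact ⟨d, 0, hd, P0, by simp⟩
    · exact ⟨0, 0, P0, P0, by simp⟩
    · rintro x y _ _ ⟨a, b, ha, hb, rfl⟩ ⟨a', b', ha', hb', rfl⟩
      exact ⟨a + a', b + b', Padd _ _ ha ha', Padd _ _ hb hb', by abel⟩
    · rintro x _ ⟨a, b, ha, hb, rfl⟩
      exact ⟨b, a, hb, ha, by abel⟩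
  set N := (supportGroup 𝒜 f).index with hN
  have hN0 : 0 < N := Nat.pos_of_ne_zero hrel.index_ne_zero
  have hmem : N • dh ∈ supportGroup 𝒜 f := AddSubgroup.nsmul_index_mem _ dh
  obtain ⟨a, b, ha, hb, hab⟩ := hdiff _ hmem
  obtain ⟨k, hk⟩ := Pcompl a ha
  obtain ⟨g, g0, hg, hgdvd⟩ := Padd _ _ hb hk
  exact ⟨N, k, g, b + (k • df - a), hN0, g0, hg, hgdvd, by rw [hab]; abel⟩
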